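/- arXiv:2601.15329 — 4 statements merged into one kernel-verified Lean document; each statement's English description precedes it below -/
import Mathlib

section
/- Lyapunov's inequality: if f is continuous on [a,b], twice differentiable on (a,b), positive on (a,b), and f(a) = f(b) = 0, then the integral over (a,b) of |f''|/f is strictly greater than 4/(b-a) (in the extended reals, allowing the integral to be infinite). -/
open MeasureTheory Set

theorem lyapunov_inequality (a b : ℝ) (f : ℝ → ℝ) (hab : a < b)
    (hc : ContinuousOn f (Icc a b))
    (hd1 : ∀ x ∈ Ioo a b, DifferentiableAt ℝ f x)
    (hd2 : ∀ x ∈ Ioo a b, DifferentiableAt ℝ (deriv f) x)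
    (hpos : ∀ x ∈ Ioo a b, 0 < f x)
    (ha : f a = 0) (hb : f b = 0) :
    ENNReal.ofReal (4 / (b - a)) <
      ∫⁻ x in Ioo a b, ENNReal.ofReal (|deriv (deriv f) x| / f x) := by
  by_contra hcon
  push_neg at hcon
  set F2 := deriv (deriv f) with hF2def
  set I := ∫⁻ x in Ioo a b, ENNReal.ofReal (|F2 x| / f x) with hIdef
  have hIfin : I ≠ ⊤ := ne_top_of_le_ne_top ENNReal.ofReal_ne_top hcon
  -- maximum point
  obtain ⟨c, hcmem, hcmax⟩ := isCompact_Icc.exists_isMaxOn (Set.nonempty_Icc.mpr hab.le) hc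
  have hcmax' : ∀ y ∈ Icc a b, f y ≤ f c := fun y hy => hcmax hy
  set M := f c with hMdef
  have hmid : (a + b) / 2 ∈ Ioo a b := ⟨by linarith, by linarith⟩
  have hMpos : 0 < M := lt_of_lt_of_le (hpos _ hmid) (hcmax' _ (Ioo_subset_Icc_self hmid))
  have hca : a < c := by
    rcases lt_or_eq_of_le hcmem.1 with h | h
    · exact h
    · exact absurd (h ▸ ha : f c = 0) (by linarith)
  have hcb : c < b := by
    rcases lt_or_eq_of_le hcmem.2 with h | h
    · exact h
    · exact absurd (h ▸ hb : f c = 0) (by linarith)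
  -- MVT points
  obtain ⟨x1, hx1mem, hx1⟩ : ∃ x ∈ Ioo a c, deriv f x = (f c - f a) / (c - a) :=
    exists_deriv_eq_slope f hca (hc.mono (Icc_subset_Icc le_rfl hcb.le))
      (fun x hx => (hd1 x ⟨hx.1, hx.2.trans hcb⟩).differentiableWithinAt)
  obtain ⟨x2, hx2mem, hx2⟩ : ∃ x ∈ Ioo c b, deriv f x = (f b - f c) / (b - c) :=
    exists_deriv_eq_slope f hcb (hc.mono (Icc_subset_Icc hca.le le_rfl))
      (fun x hx => (hd1 x ⟨hca.trans hx.1, hx.2⟩).differentiableWithinAt)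
  rw [ha] at hx1; rw [hb] at hx2
  have hx1v : deriv f x1 = M / (c - a) := by rw [hx1, hMdef]; ring_nf
  have hx2v : deriv f x2 = -(M / (b - c)) := by rw [hx2, hMdef]; ring_nf
  have hax1 : a < x1 := hx1mem.1
  have hx1c : x1 < c := hx1mem.2
  have hcx2 : c < x2 := hx2mem.1
  have hx2b : x2 < b := hx2mem.2
  have hx1Ioo : x1 ∈ Ioo a b := ⟨hax1, hx1c.trans hcb⟩
  have hx2Ioo : x2 ∈ Ioo a b := ⟨hca.trans hcx2, hx2b⟩
  -- measurability
  have hF2meas : Measurable F2 := measurable_deriv (deriv f)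
  -- integrability of F2 on Ioo a b
  have hptwise : ∀ x ∈ Ioo a b,
      (‖F2 x‖₊ : ENNReal) ≤ ENNReal.ofReal M * ENNReal.ofReal (|F2 x| / f x) := by
    intro x hx
    have hfx := hpos x hx
    have hfM : f x ≤ M := hcmax' x (Ioo_subset_Icc_self hx)
    rw [← ENNReal.ofReal_mul hMpos.le]
    rw [show ((‖F2 x‖₊ : ENNReal)) = ENNReal.ofReal |F2 x| from
      (Real.enorm_eq_ofReal_abs _)]
    apply ENNReal.ofReal_le_ofReal
    rw [mul_div_assoc', le_div_iff₀ hfx]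
    calc |F2 x| * f x ≤ |F2 x| * M := by
          exact mul_le_mul_of_nonneg_left hfM (abs_nonneg _)
      _ = M * |F2 x| := mul_comm _ _
  have hF2int : IntegrableOn F2 (Ioo a b) := by
    constructor
    · exact hF2meas.aestronglyMeasurable
    · rw [HasFiniteIntegral]
      calc ∫⁻ x in Ioo a b, (‖F2 x‖₊ : ENNReal)
          ≤ ∫⁻ x in Ioo a b, ENNReal.ofReal M * ENNReal.ofReal (|F2 x| / f x) := by
            apply lintegral_mono_ae
            exact (ae_restrict_iff' measurableSet_Ioo).mpr (Filter.Eventually.of_forall hptwise)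
        _ = ENNReal.ofReal M * I := lintegral_const_mul' _ _ ENNReal.ofReal_ne_top
        _ < ⊤ := ENNReal.mul_lt_top ENNReal.ofReal_lt_top hIfin.lt_top
  -- FTC helper
  have hFTC : ∀ u v : ℝ, a < u → u ≤ v → v < b →
      ∫ x in Ioo u v, F2 x = deriv f v - deriv f u := by
    intro u v hu huv hv
    have h1 : ∫ x in u..v, F2 x = deriv f v - deriv f u := by
      apply intervalIntegral.integral_eq_sub_of_hasDerivAt
      · intro x hx
        rw [uIcc_of_le huv] at hx
        exact (hd2 x ⟨lt_of_lt_of_le hu hx.1, lt_of_le_of_lt hx.2 hv⟩).hasDerivAt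
      · rw [intervalIntegrable_iff_integrableOn_Ioc_of_le huv]
        exact hF2int.mono_set (fun x hx => ⟨hu.trans hx.1, hx.2.trans_lt hv⟩)
    rw [← h1, intervalIntegral.integral_of_le huv, ← integral_Ioc_eq_integral_Ioo]
  -- the real integral D
  set D := ∫ x in Ioo x1 x2, |F2 x| with hDdef
  have hx1x2 : x1 < x2 := hx1c.trans hcx2
  have hintsub : IntegrableOn F2 (Ioo x1 x2) :=
    hF2int.mono_set (fun x hx => ⟨hax1.trans hx.1, hx.2.trans hx2b⟩)
  have hDge : M / (c - a) + M / (b - c) ≤ D := by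
    have h1 : ∫ x in Ioo x1 x2, F2 x = deriv f x2 - deriv f x1 :=
      hFTC x1 x2 hax1 hx1x2.le hx2b
    have h2 : |∫ x in Ioo x1 x2, F2 x| ≤ D := by
      rw [hDdef]
      have := norm_integral_le_integral_norm (μ := volume.restrict (Ioo x1 x2)) F2
      simpa [Real.norm_eq_abs] using this
    rw [h1, hx1v, hx2v] at h2
    have h3 : -(-(M / (b - c)) - M / (c - a)) ≤ |(-(M / (b - c)) - M / (c - a))| := neg_le_abs _
    linarith
  have hDM : 4 / (b - a) ≤ D / M := by
    have h4 : 4 / (b - a) ≤ (M / (c - a) + M / (b - c)) / M := by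
      rw [div_le_div_iff₀ (by linarith) hMpos]
      have hca' : 0 < c - a := by linarith
      have hbc' : 0 < b - c := by linarith
      rw [div_add_div _ _ (ne_of_gt hca') (ne_of_gt hbc')]
      rw [div_mul_eq_mul_div, le_div_iff₀ (by positivity)]
      nlinarith [sq_nonneg (c - a - (b - c)), sq_nonneg (b - a)]
    calc 4 / (b - a) ≤ (M / (c - a) + M / (b - c)) / M := h4
      _ ≤ D / M := by gcongr
  -- H : the lower-bound lintegral
  set H := ∫⁻ x in Ioo x1 x2, ENNReal.ofReal (|F2 x| / M) with hHdef
  have hintabs : IntegrableOn (fun x => |F2 x| / M) (Ioo x1 x2) := hintsub.abs.div_const M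
  have hHval : H = ENNReal.ofReal (D / M) := by
    rw [hHdef, ← ofReal_integral_eq_lintegral_ofReal hintabs
      (Filter.Eventually.of_forall (fun x => by positivity)), integral_div]
  have hHR : ENNReal.ofReal (4 / (b - a)) ≤ H := by
    rw [hHval]; exact ENNReal.ofReal_le_ofReal hDM
  set J2 := ∫⁻ x in Ioo x1 x2, ENNReal.ofReal (|F2 x| / f x) with hJ2def
  have hsub12 : Ioo x1 x2 ⊆ Ioo a b := fun x hx => ⟨hax1.trans hx.1, hx.2.trans hx2b⟩
  have hle2 : ∀ x ∈ Ioo x1 x2, ENNReal.ofReal (|F2 x| / M) ≤ ENNReal.ofReal (|F2 x| / f x) := by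
    intro x hx
    have hx' : x ∈ Ioo a b := hsub12 hx
    apply ENNReal.ofReal_le_ofReal
    exact div_le_div_of_nonneg_left (abs_nonneg _) (hpos x hx')
      (hcmax' x (Ioo_subset_Icc_self hx'))
  have hHJ2 : H ≤ J2 := by
    apply lintegral_mono_ae
    exact (ae_restrict_iff' measurableSet_Ioo).mpr (Filter.Eventually.of_forall hle2)
  have hJ2I : J2 ≤ I := lintegral_mono_set hsub12
  have hHfin : H ≠ ⊤ := by rw [hHval]; exact ENNReal.ofReal_ne_top
  have heq : J2 = H := le_antisymm ((hJ2I.trans hcon).trans hHR) hHJ2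
  -- a.e. equality on Ioo x1 x2
  have hfcontOn : ContinuousOn f (Ioo x1 x2) := fun x hx =>
    ((hd1 x (hsub12 hx)).continuousAt).continuousWithinAt
  have hfaem : AEMeasurable f (volume.restrict (Ioo x1 x2)) :=
    hfcontOn.aemeasurable measurableSet_Ioo
  have hg2aem : AEMeasurable (fun x => ENNReal.ofReal (|F2 x| / f x))
      (volume.restrict (Ioo x1 x2)) :=
    ((hF2meas.abs.aemeasurable.div hfaem).ennreal_ofReal)
  have hh2meas : Measurable (fun x => ENNReal.ofReal (|F2 x| / M)) :=
    (hF2meas.abs.div_const M).ennreal_ofReal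
  have hleae : (fun x => ENNReal.ofReal (|F2 x| / M)) ≤ᵐ[volume.restrict (Ioo x1 x2)]
      (fun x => ENNReal.ofReal (|F2 x| / f x)) :=
    (ae_restrict_iff' measurableSet_Ioo).mpr (Filter.Eventually.of_forall hle2)
  have hsubzero : ∫⁻ x in Ioo x1 x2,
      (ENNReal.ofReal (|F2 x| / f x) - ENNReal.ofReal (|F2 x| / M)) = 0 := by
    rw [lintegral_sub' hh2meas.aemeasurable (by rw [← hHdef]; exact hHfin) hleae,
      ← hJ2def, ← hHdef, heq, tsub_self]
  have haeeq : ∀ᵐ x ∂(volume.restrict (Ioo x1 x2)),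
      ENNReal.ofReal (|F2 x| / f x) = ENNReal.ofReal (|F2 x| / M) := by
    have h0 := (lintegral_eq_zero_iff' (hg2aem.sub hh2meas.aemeasurable)).mp hsubzero
    filter_upwards [h0, hleae] with x h1 h2
    have h3 : ENNReal.ofReal (|F2 x| / f x) ≤ ENNReal.ofReal (|F2 x| / M) :=
      tsub_eq_zero_iff_le.mp h1
    exact le_antisymm h3 h2
  have haeeq' : ∀ᵐ x, x ∈ Ioo x1 x2 →
      ENNReal.ofReal (|F2 x| / f x) = ENNReal.ofReal (|F2 x| / M) :=
    (ae_restrict_iff' measurableSet_Ioo).mp haeeq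
  -- the first time tau where f reaches M
  set S := Icc x1 b ∩ f ⁻¹' {M} with hSdef
  have hSclosed : IsClosed S :=
    (hc.mono (Icc_subset_Icc hax1.le le_rfl)).preimage_isClosed_of_isClosed
      isClosed_Icc isClosed_singleton
  have hScmem : c ∈ S := ⟨⟨hx1c.le, hcb.le⟩, rfl⟩
  have hSbdd : BddBelow S := ⟨x1, fun x hx => hx.1.1⟩
  set τ := sInf S with hτdef
  have hτS : τ ∈ S := hSclosed.csInf_mem ⟨c, hScmem⟩ hSbdd
  have hτc : τ ≤ c := csInf_le hSbdd hScmem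
  have hfτ : f τ = M := hτS.2
  have hx1τ' : x1 ≤ τ := hτS.1.1
  have hτb : τ < b := lt_of_le_of_lt hτc hcb
  have hτIoo : τ ∈ Ioo a b := ⟨hax1.trans_le hx1τ', hτb⟩
  have hlocmax : ∀ y ∈ Ioo a b, f y = M → deriv f y = 0 := by
    intro y hy hyM
    have : IsLocalMax f y := by
      have hmem : Icc a b ∈ nhds y := Icc_mem_nhds hy.1 hy.2
      exact Filter.eventually_of_mem hmem (fun z hz => hyM ▸ hcmax' z hz)
    exact this.deriv_eq_zero
  have hfx1M : f x1 < M := by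
    rcases lt_or_eq_of_le (hcmax' x1 (Ioo_subset_Icc_self hx1Ioo)) with h | h
    · exact h
    · exfalso
      have h0 := hlocmax x1 hx1Ioo h
      rw [hx1v] at h0
      have : (0:ℝ) < M / (c - a) := div_pos hMpos (by linarith)
      linarith
  have hx1τ : x1 < τ := lt_of_le_of_ne hx1τ' (fun h => by rw [← h] at hfτ; linarith)
  have hfltM : ∀ x ∈ Ico x1 τ, f x < M := by
    intro x hx
    rcases lt_or_eq_of_le (hcmax' x ⟨hax1.le.trans hx.1, (hx.2.trans_le hτc).le.trans hcb.le⟩)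
      with h | h
    · exact h
    · exact absurd (csInf_le hSbdd ⟨⟨hx.1, ((hx.2.trans_le hτc).trans hcb).le⟩, h⟩)
        (not_le.mpr hx.2)
  -- F2 = 0 a.e. on Ioo x1 τ
  have hF2zero : ∀ᵐ x, x ∈ Ioo x1 τ → F2 x = 0 := by
    filter_upwards [haeeq'] with x hx hxmem
    have hxm2 : x ∈ Ioo x1 x2 := ⟨hxmem.1, (hxmem.2.trans_le hτc).trans hcx2⟩
    have hx' : x ∈ Ioo a b := hsub12 hxm2
    have hfx := hpos x hx'
    have hfxM : f x < M := hfltM x ⟨hxmem.1.le, hxmem.2⟩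
    have heqx := hx hxm2
    rw [ENNReal.ofReal_eq_ofReal_iff (by positivity) (by positivity)] at heqx
    by_contra hne
    have habs : |F2 x| ≠ 0 := fun h => hne (abs_eq_zero.mp h)
    rw [div_eq_div_iff (by positivity) hMpos.ne'] at heqx
    have : M = f x := mul_left_cancel₀ habs heqx
    linarith
  -- final contradiction via FTC on [x1, τ]
  have hintzero : ∫ x in Ioo x1 τ, F2 x = 0 := by
    apply integral_eq_zero_of_ae
    exact (ae_restrict_iff' measurableSet_Ioo).mpr hF2zero
  have hFTC2 := hFTC x1 τ hax1 hx1τ.le hτb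
  rw [hintzero, hlocmax τ hτIoo hfτ, hx1v] at hFTC2
  have : (0:ℝ) < M / (c - a) := div_pos hMpos (by linarith)
  linarith
end

section
/- The constant 4 in Lyapunov's inequality is optimal: for every ε > 0 there exists a function f that is continuous on [0,1], twice continuously differentiable on (0,1), positive on (0,1) with f(0) = f(1) = 0, such that ∫_{0}^{1} |f''|/f < 4 + ε. -/
open MeasureTheory Set intervalIntegral

noncomputable def bH (δ t : ℝ) : ℝ := (3/δ^3) * max ((t - (1/2 - δ)) * ((1/2 + δ) - t)) 0
noncomputable def bG1 (δ x : ℝ) : ℝ := ∫ t in (1/2 - δ)..x, bH δ t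
noncomputable def bG (δ x : ℝ) : ℝ := ∫ t in (1/2 - δ)..x, bG1 δ t
noncomputable def bF (δ x : ℝ) : ℝ := 2*x - bG δ x

lemma bH_cont (δ : ℝ) : Continuous (bH δ) := by
  unfold bH; fun_prop

lemma bH_nonneg {δ : ℝ} (hδ : 0 < δ) (t : ℝ) : 0 ≤ bH δ t :=
  mul_nonneg (by positivity) (le_max_right _ _)

lemma bH_eq_zero {δ : ℝ} (hδ : 0 < δ) {t : ℝ} (ht : t ≤ 1/2 - δ ∨ 1/2 + δ ≤ t) :
    bH δ t = 0 := by
  unfold bH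
  rw [max_eq_right, mul_zero]
  rcases ht with h | h
  · exact mul_nonpos_of_nonpos_of_nonneg (by linarith) (by linarith)
  · exact mul_nonpos_of_nonneg_of_nonpos (by linarith) (by linarith)

lemma bG1_hasDeriv (δ : ℝ) (x : ℝ) : HasDerivAt (bG1 δ) (bH δ x) x :=
  intervalIntegral.integral_hasDerivAt_right ((bH_cont δ).intervalIntegrable _ _)
    ((bH_cont δ).stronglyMeasurableAtFilter _ _) (bH_cont δ).continuousAt

lemma bG1_cont (δ : ℝ) : Continuous (bG1 δ) :=
  continuous_iff_continuousAt.2 fun x => (bG1_hasDeriv δ x).continuousAt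

lemma bG_hasDeriv (δ : ℝ) (x : ℝ) : HasDerivAt (bG δ) (bG1 δ x) x :=
  intervalIntegral.integral_hasDerivAt_right ((bG1_cont δ).intervalIntegrable _ _)
    ((bG1_cont δ).stronglyMeasurableAtFilter _ _) (bG1_cont δ).continuousAt

lemma bF_hasDeriv (δ : ℝ) (x : ℝ) : HasDerivAt (bF δ) (2 - bG1 δ x) x := by
  have h : HasDerivAt (fun y : ℝ => 2*y) 2 x := by
    simpa using (hasDerivAt_id x).const_mul (2:ℝ)
  exact h.sub (bG_hasDeriv δ x)

lemma bF_deriv (δ : ℝ) : deriv (bF δ) = fun x => 2 - bG1 δ x :=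
  funext fun x => (bF_hasDeriv δ x).deriv

lemma bF_deriv2 (δ : ℝ) : deriv (deriv (bF δ)) = fun x => -(bH δ x) := by
  rw [bF_deriv]
  funext x
  have h : HasDerivAt (fun y => 2 - bG1 δ y) (-(bH δ x)) x := by
    exact ((hasDerivAt_const x (2:ℝ)).sub (bG1_hasDeriv δ x)).congr_deriv (zero_sub _)
  exact h.deriv

lemma bF_contDiff (δ : ℝ) : ContDiff ℝ 2 (bF δ) := by
  rw [show (2 : WithTop ℕ∞) = 1 + 1 by norm_num, contDiff_succ_iff_deriv]
  refine ⟨fun x => (bF_hasDeriv δ x).differentiableAt, by simp, ?_⟩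
  rw [contDiff_one_iff_deriv, bF_deriv]
  constructor
  · exact fun x => by
      simpa using ((hasDerivAt_const x (2:ℝ)).sub (bG1_hasDeriv δ x)).differentiableAt
  · rw [show deriv (fun x => 2 - bG1 δ x) = fun x => -(bH δ x) from ?_]
    · exact (bH_cont δ).neg
    · funext x
      exact (by exact ((hasDerivAt_const x (2:ℝ)).sub (bG1_hasDeriv δ x)).congr_deriv (zero_sub _) :
        HasDerivAt (fun y => 2 - bG1 δ y) (-(bH δ x)) x).deriv

lemma bG1_eq_zero {δ : ℝ} (hδ : 0 < δ) {x : ℝ} (hx : x ≤ 1/2 - δ) : bG1 δ x = 0 := by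
  unfold bG1
  rw [intervalIntegral.integral_congr (g := fun _ => (0:ℝ)), intervalIntegral.integral_zero]
  intro t ht
  rw [uIcc_of_ge hx] at ht
  exact bH_eq_zero hδ (Or.inl ht.2)

lemma bG1_formula {δ : ℝ} (hδ : 0 < δ) {x : ℝ} (hx1 : 1/2 - δ ≤ x) (hx2 : x ≤ 1/2 + δ) :
    bG1 δ x = (3/δ^3) * (δ*(x - (1/2 - δ))^2 - (x - (1/2 - δ))^3/3) := by
  unfold bG1
  rw [intervalIntegral.integral_congr
    (g := fun t => (3/δ^3) * ((t - (1/2 - δ)) * ((1/2 + δ) - t)))]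
  · rw [intervalIntegral.integral_const_mul]
    rw [show (fun t => (t - (1/2 - δ)) * ((1/2 + δ) - t))
        = fun t => (fun u => u * (2*δ - u)) (t - (1/2 - δ)) from funext fun t => by ring]
    rw [intervalIntegral.integral_comp_sub_right (fun u => u * (2*δ - u)) (1/2 - δ), sub_self]
    rw [show (fun u : ℝ => u * (2*δ - u)) = fun u : ℝ => 2*δ*u - u^2 from funext fun u => by ring]
    rw [intervalIntegral.integral_sub ((by fun_prop : Continuous (fun u : ℝ => 2*δ*u)).intervalIntegrable _ _) ((by fun_prop : Continuous (fun u : ℝ => u^2)).intervalIntegrable _ _),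
      intervalIntegral.integral_const_mul, integral_id, integral_pow]
    ring
  · intro t ht
    rw [uIcc_of_le hx1] at ht
    unfold bH
    rw [max_eq_left (mul_nonneg (by linarith [ht.1]) (by linarith [ht.2]))]

lemma bG1_at_b {δ : ℝ} (hδ : 0 < δ) : bG1 δ (1/2 + δ) = 4 := by
  rw [bG1_formula hδ (by linarith) le_rfl]
  field_simp
  ring

lemma bG1_eq_four {δ : ℝ} (hδ : 0 < δ) {x : ℝ} (hx : 1/2 + δ ≤ x) : bG1 δ x = 4 := by
  have hsplit := intervalIntegral.integral_add_adjacent_intervals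
    ((bH_cont δ).intervalIntegrable (μ := volume) (1/2 - δ) (1/2 + δ))
    ((bH_cont δ).intervalIntegrable (μ := volume) (1/2 + δ) x)
  have h2 : (∫ t in (1/2 + δ)..x, bH δ t) = 0 := by
    rw [intervalIntegral.integral_congr (g := fun _ => (0:ℝ)), intervalIntegral.integral_zero]
    intro t ht
    rw [uIcc_of_le hx] at ht
    exact bH_eq_zero hδ (Or.inr ht.1)
  have h1 : (∫ t in (1/2 - δ)..(1/2 + δ), bH δ t) = 4 := bG1_at_b hδ
  unfold bG1
  rw [← hsplit, h1, h2, add_zero]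

lemma bG1_nonneg {δ : ℝ} (hδ : 0 < δ) {x : ℝ} (hx : 1/2 - δ ≤ x) : 0 ≤ bG1 δ x :=
  intervalIntegral.integral_nonneg hx fun t _ => bH_nonneg hδ t

lemma bG1_le_four {δ : ℝ} (hδ : 0 < δ) (x : ℝ) : bG1 δ x ≤ 4 := by
  rcases le_or_gt x (1/2 - δ) with h | h
  · rw [bG1_eq_zero hδ h]; norm_num
  rcases le_or_gt x (1/2 + δ) with h2 | h2
  · have hsplit := intervalIntegral.integral_add_adjacent_intervals
      ((bH_cont δ).intervalIntegrable (μ := volume) (1/2 - δ) x)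
      ((bH_cont δ).intervalIntegrable (μ := volume) x (1/2 + δ))
    have h3 : 0 ≤ ∫ t in x..(1/2 + δ), bH δ t :=
      intervalIntegral.integral_nonneg h2 fun t _ => bH_nonneg hδ t
    have h4 : bG1 δ x + (∫ t in x..(1/2+δ), bH δ t) = 4 := by
      unfold bG1; rw [hsplit]; exact bG1_at_b hδ
    linarith
  · rw [bG1_eq_four hδ h2.le]
lemma bG_eq_zero {δ : ℝ} (hδ : 0 < δ) {x : ℝ} (hx : x ≤ 1/2 - δ) : bG δ x = 0 := by
  unfold bG
  rw [intervalIntegral.integral_congr (g := fun _ => (0:ℝ)), intervalIntegral.integral_zero]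
  intro t ht
  rw [uIcc_of_ge hx] at ht
  exact bG1_eq_zero hδ ht.2

lemma bG_le {δ : ℝ} (hδ : 0 < δ) {x : ℝ} (hx1 : 1/2 - δ ≤ x) :
    bG δ x ≤ 4 * (x - (1/2 - δ)) := by
  have h : bG δ x ≤ ∫ _t in (1/2 - δ)..x, (4:ℝ) := by
    unfold bG
    exact intervalIntegral.integral_mono_on hx1
      ((bG1_cont δ).intervalIntegrable _ _) (intervalIntegrable_const)
      (fun t _ => bG1_le_four hδ t)
  rw [intervalIntegral.integral_const] at h
  simpa [smul_eq_mul, mul_comm] using h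

lemma intG1_ab {δ : ℝ} (hδ : 0 < δ) :
    (∫ t in (1/2 - δ)..(1/2 + δ), bG1 δ t) = 4 * δ := by
  rw [intervalIntegral.integral_congr
    (g := fun t => (3/δ^3) * (δ*(t - (1/2 - δ))^2 - (t - (1/2 - δ))^3/3))]
  · rw [intervalIntegral.integral_const_mul]
    rw [show (fun t => δ*(t - (1/2 - δ))^2 - (t - (1/2 - δ))^3/3)
        = fun t => (fun u => δ*u^2 - u^3/3) (t - (1/2 - δ)) from funext fun t => by ring]
    rw [intervalIntegral.integral_comp_sub_right (fun u => δ*u^2 - u^3/3) (1/2 - δ), sub_self]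
    rw [show (1/2 + δ - (1/2 - δ)) = 2*δ by ring]
    rw [intervalIntegral.integral_sub
      ((by fun_prop : Continuous (fun u : ℝ => δ*u^2)).intervalIntegrable _ _)
      ((by fun_prop : Continuous (fun u : ℝ => u^3/3)).intervalIntegrable _ _),
      intervalIntegral.integral_const_mul, intervalIntegral.integral_div, integral_pow,
      integral_pow]
    field_simp
    ring
  · intro t ht
    rw [uIcc_of_le (by linarith)] at ht
    exact bG1_formula hδ ht.1 ht.2

lemma bG_formula_right {δ : ℝ} (hδ : 0 < δ) {x : ℝ} (hx : 1/2 + δ ≤ x) :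
    bG δ x = 4*x - 2 := by
  have hsplit := intervalIntegral.integral_add_adjacent_intervals
    ((bG1_cont δ).intervalIntegrable (μ := volume) (1/2 - δ) (1/2 + δ))
    ((bG1_cont δ).intervalIntegrable (μ := volume) (1/2 + δ) x)
  have h2 : (∫ t in (1/2 + δ)..x, bG1 δ t) = 4 * (x - (1/2 + δ)) := by
    rw [intervalIntegral.integral_congr (g := fun _ => (4:ℝ)),
      intervalIntegral.integral_const]
    · rw [smul_eq_mul]; ring
    · intro t ht
      rw [uIcc_of_le hx] at ht
      exact bG1_eq_four hδ ht.1
  unfold bG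
  rw [← hsplit, intG1_ab hδ, h2]
  ring
lemma intH_01 {δ : ℝ} (hδ : 0 < δ) (hδ1 : δ ≤ 1/100) :
    (∫ x in Ioo (0:ℝ) 1, bH δ x) = 4 := by
  rw [← integral_Ioc_eq_integral_Ioo, ← intervalIntegral.integral_of_le (by norm_num : (0:ℝ) ≤ 1)]
  rw [← intervalIntegral.integral_add_adjacent_intervals
    ((bH_cont δ).intervalIntegrable (μ := volume) 0 (1/2 - δ))
    ((bH_cont δ).intervalIntegrable (μ := volume) (1/2 - δ) 1),
    ← intervalIntegral.integral_add_adjacent_intervals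
    ((bH_cont δ).intervalIntegrable (μ := volume) (1/2 - δ) (1/2 + δ))
    ((bH_cont δ).intervalIntegrable (μ := volume) (1/2 + δ) 1)]
  have h0 : (∫ t in (0:ℝ)..(1/2 - δ), bH δ t) = 0 := by
    rw [intervalIntegral.integral_congr (g := fun _ => (0:ℝ)), intervalIntegral.integral_zero]
    intro t ht
    rw [uIcc_of_le (by linarith)] at ht
    exact bH_eq_zero hδ (Or.inl ht.2)
  have h1 : (∫ t in (1/2 + δ)..(1:ℝ), bH δ t) = 0 := by
    rw [intervalIntegral.integral_congr (g := fun _ => (0:ℝ)), intervalIntegral.integral_zero]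
    intro t ht
    rw [uIcc_of_le (by linarith)] at ht
    exact bH_eq_zero hδ (Or.inr ht.1)
  have h2 : (∫ t in (1/2 - δ)..(1/2 + δ), bH δ t) = 4 := bG1_at_b hδ
  rw [h0, h1, h2]; ring

theorem lyapunov_constant_optimal :
    ∀ ε : ℝ, 0 < ε → ∃ f : ℝ → ℝ,
      ContinuousOn f (Icc 0 1) ∧
      ContDiffOn ℝ 2 f (Ioo 0 1) ∧
      (∀ x ∈ Ioo (0:ℝ) 1, 0 < f x) ∧
      f 0 = 0 ∧ f 1 = 0 ∧
      (∫⁻ x in Ioo (0:ℝ) 1, ENNReal.ofReal (|deriv (deriv f) x| / f x)) <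
        ENNReal.ofReal (4 + ε) := by
  intro ε hε
  set δ : ℝ := min (ε/100) (1/100) with hδdef
  have hδ : 0 < δ := lt_min (by positivity) (by norm_num)
  have hδ1 : δ ≤ 1/100 := min_le_right _ _
  have hδε : δ ≤ ε/100 := min_le_left _ _
  refine ⟨bF δ, (bF_contDiff δ).continuous.continuousOn, (bF_contDiff δ).contDiffOn, ?_, ?_, ?_, ?_⟩
  · -- positivity
    rintro x ⟨hx0, hx1⟩
    rcases le_or_gt x (1/2 - δ) with h | h
    · unfold bF; rw [bG_eq_zero hδ h]; linarith
    rcases le_or_gt x (1/2 + δ) with h2 | h2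
    · have := bG_le hδ h.le
      unfold bF; linarith
    · unfold bF; rw [bG_formula_right hδ h2.le]; linarith
  · unfold bF; rw [bG_eq_zero hδ (by linarith)]; ring
  · unfold bF; rw [bG_formula_right hδ (by linarith)]; ring
  · -- the integral bound
    have hflb : ∀ x ∈ Icc (1/2 - δ) (1/2 + δ), (1 - 6*δ) ≤ bF δ x := by
      rintro x ⟨ha, hb⟩
      have := bG_le hδ ha
      unfold bF; linarith
    have hden : (0:ℝ) < 1 - 6*δ := by linarith
    have step1 : (∫⁻ x in Ioo (0:ℝ) 1, ENNReal.ofReal (|deriv (deriv (bF δ)) x| / bF δ x)) ≤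
        ∫⁻ x in Ioo (0:ℝ) 1, ENNReal.ofReal (bH δ x / (1 - 6*δ)) := by
      refine setLIntegral_mono
        (ENNReal.measurable_ofReal.comp ((bH_cont δ).div_const _).measurable) ?_
      intro x hx
      rw [bF_deriv2]
      simp only [abs_neg, abs_of_nonneg (bH_nonneg hδ x)]
      apply ENNReal.ofReal_le_ofReal
      rcases le_or_gt x (1/2 - δ) with h | h
      · rw [bH_eq_zero hδ (Or.inl h)]; simp
      rcases le_or_gt (1/2 + δ) x with h2 | h2
      · rw [bH_eq_zero hδ (Or.inr h2)]; simp
      · have hf := hflb x ⟨h.le, h2.le⟩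
        exact div_le_div_of_nonneg_left (bH_nonneg hδ x) hden hf
    have step2 : (∫⁻ x in Ioo (0:ℝ) 1, ENNReal.ofReal (bH δ x / (1 - 6*δ)))
        = ENNReal.ofReal ((∫ x in Ioo (0:ℝ) 1, bH δ x) / (1 - 6*δ)) := by
      rw [← MeasureTheory.integral_div]
      refine (MeasureTheory.ofReal_integral_eq_lintegral_ofReal ?_ ?_).symm
      · exact (((bH_cont δ).div_const _).integrableOn_Icc (a := 0) (b := 1)).mono_set
          Ioo_subset_Icc_self
      · exact Filter.Eventually.of_forall fun x => div_nonneg (bH_nonneg hδ x) hden.le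
    refine lt_of_le_of_lt (step1.trans step2.le) ?_
    rw [intH_01 hδ hδ1, ENNReal.ofReal_lt_ofReal_iff (by positivity), div_lt_iff₀ hden]
    nlinarith [mul_pos hε hδ]
end

section
/- If f is continuous on [a,b], differentiable on (a,b), positive on (a,b), f(a) = f(b) = 0, and the integral ∫_a^b |f''|/f equals exactly 4/(b-a) (i.e., equality in Lyapunov's bound with non-strict ≥ derived from the maximum estimate), then a contradiction arises: equality in the first step of the proof forces f to be constant, hence zero. Formally: the inequality ∫_a^b |f''|/f ≥ 4/(b-a) can never be an equality under the stated hypotheses. -/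
open MeasureTheory Set Filter Topology

set_option maxHeartbeats 1000000

theorem lyapunov_never_equality (a b : ℝ) (f : ℝ → ℝ) (hab : a < b)
    (hc : ContinuousOn f (Icc a b))
    (hd1 : ∀ x ∈ Ioo a b, DifferentiableAt ℝ f x)
    (hd2 : ∀ x ∈ Ioo a b, DifferentiableAt ℝ (deriv f) x)
    (hpos : ∀ x ∈ Ioo a b, 0 < f x)
    (ha : f a = 0) (hb : f b = 0)
    (hint : IntegrableOn (fun x => |deriv (deriv f) x| / f x) (Ioo a b)) :
    (∫ x in Ioo a b, |deriv (deriv f) x| / f x) ≠ 4 / (b - a) := by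
  intro hI
  set f1 := deriv f with hf1def
  set f2 := deriv (deriv f) with hf2def
  set g : ℝ → ℝ := fun x => |f2 x| / f x with hgdef
  -- maximum point
  obtain ⟨c, hcmem, hcmax⟩ := isCompact_Icc.exists_isMaxOn (nonempty_Icc.2 hab.le) hc
  set M := f c with hMdef
  have hmax : ∀ x ∈ Icc a b, f x ≤ M := fun x hx => hcmax hx
  have hmid : (a + b) / 2 ∈ Ioo a b := ⟨by linarith, by linarith⟩
  have hMpos : 0 < M :=
    lt_of_lt_of_le (hpos _ hmid) (hmax _ ⟨by linarith, by linarith⟩)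
  have hca : a < c := by
    rcases hcmem.1.lt_or_eq with h | h
    · exact h
    · exfalso; rw [hMdef, ← h, ha] at hMpos; exact lt_irrefl _ hMpos
  have hcb : c < b := by
    rcases hcmem.2.lt_or_eq with h | h
    · exact h
    · exfalso; rw [hMdef, h, hb] at hMpos; exact lt_irrefl _ hMpos
  have hcIoo : c ∈ Ioo a b := ⟨hca, hcb⟩
  -- derivative zero at max
  have hf1c : f1 c = 0 :=
    ((hcmax.isLocalMax (Icc_mem_nhds hca hcb))).deriv_eq_zero
  -- MVT points
  obtain ⟨ξ₁, hξ₁mem, hξ₁0⟩ := exists_deriv_eq_slope f hca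
    (hc.mono (Icc_subset_Icc le_rfl hcb.le))
    (fun x hx => (hd1 x ⟨hx.1, hx.2.trans hcb⟩).differentiableWithinAt)
  obtain ⟨ξ₂, hξ₂mem, hξ₂0⟩ := exists_deriv_eq_slope f hcb
    (hc.mono (Icc_subset_Icc hca.le le_rfl))
    (fun x hx => (hd1 x ⟨hca.trans hx.1, hx.2⟩).differentiableWithinAt)
  set k := M / (c - a) with hkdef
  have hkpos : 0 < k := div_pos hMpos (by linarith [hξ₁mem.1])
  have hξ₁ : f1 ξ₁ = k := by rw [hf1def, hξ₁0, ha, sub_zero]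
  have hξ₂ : f1 ξ₂ = -(M / (b - c)) := by rw [hf1def, hξ₂0, hb, zero_sub, neg_div]
  have haξ₁ : a < ξ₁ := hξ₁mem.1
  have hξ₁c : ξ₁ < c := hξ₁mem.2
  have hcξ₂ : c < ξ₂ := hξ₂mem.1
  have hξ₂b : ξ₂ < b := hξ₂mem.2
  have hξ₁ξ₂ : ξ₁ < ξ₂ := hξ₁c.trans hcξ₂
  -- basic positivity
  have hbc : 0 < b - c := by linarith
  have hca' : 0 < c - a := by linarith
  -- integrability facts
  have hmeas2 : Measurable f2 := measurable_deriv _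
  have hboundg : ∀ x ∈ Ioo a b, |f2 x| ≤ M * g x := by
    intro x hx
    have h1 : 0 < f x := hpos x hx
    have h2 : f x ≤ M := hmax x (Ioo_subset_Icc_self hx)
    have : |f2 x| = g x * f x := by
      rw [hgdef]; field_simp
    rw [this]
    have hgnn : 0 ≤ g x := div_nonneg (abs_nonneg _) h1.le
    calc g x * f x ≤ g x * M := by nlinarith
      _ = M * g x := mul_comm _ _
  have hf2int : ∀ s : Set ℝ, s ⊆ Ioo a b → MeasurableSet s → IntegrableOn f2 s := by
    intro s hs hms
    apply Integrable.mono' ((hint.mono_set hs).const_mul M)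
      hmeas2.aestronglyMeasurable.restrict
    filter_upwards [ae_restrict_mem hms] with x hx
    rw [Real.norm_eq_abs]
    exact hboundg x (hs hx)
  have hII : ∀ u v : ℝ, a < u → u ≤ v → v < b → IntervalIntegrable f2 volume u v := by
    intro u v hu huv hv
    rw [intervalIntegrable_iff_integrableOn_Ioc_of_le huv]
    exact hf2int _ (fun x hx => ⟨hu.trans hx.1, hx.2.trans_lt hv⟩) measurableSet_Ioc
  -- FTC for f1
  have hFTC : ∀ u v : ℝ, a < u → u ≤ v → v < b → ∫ x in u..v, f2 x = f1 v - f1 u := by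
    intro u v hu huv hv
    apply intervalIntegral.integral_eq_sub_of_hasDerivAt
    · intro x hx
      rw [uIcc_of_le huv] at hx
      exact (hd2 x ⟨hu.trans_le hx.1, hx.2.trans_lt hv⟩).hasDerivAt
    · exact hII u v hu huv hv
  -- the chain
  set J := ∫ x in Ioo ξ₁ ξ₂, g x with hJdef
  set K := ∫ x in Ioo ξ₁ ξ₂, |f2 x| with hKdef
  have hsub12 : Ioo ξ₁ ξ₂ ⊆ Ioo a b := fun x hx => ⟨haξ₁.trans hx.1, hx.2.trans hξ₂b⟩
  have hgnn_ab : 0 ≤ᶠ[ae (volume.restrict (Ioo a b))] g := by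
    filter_upwards [ae_restrict_mem measurableSet_Ioo] with x hx
    exact div_nonneg (abs_nonneg _) (hpos x hx).le
  have hJleI : J ≤ ∫ x in Ioo a b, g x :=
    setIntegral_mono_set hint hgnn_ab (HasSubset.Subset.eventuallyLE hsub12)
  have hgint12 : IntegrableOn g (Ioo ξ₁ ξ₂) := hint.mono_set hsub12
  have habsint12 : IntegrableOn (fun x => |f2 x|) (Ioo ξ₁ ξ₂) :=
    (hf2int _ hsub12 measurableSet_Ioo).abs
  have hKleMJ : K ≤ M * J := by
    have : K ≤ ∫ x in Ioo ξ₁ ξ₂, M * g x := by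
      apply setIntegral_mono_on habsint12 (hgint12.const_mul M) measurableSet_Ioo
      intro x hx
      exact hboundg x (hsub12 hx)
    rwa [integral_const_mul] at this
  have hIntf2 : ∫ x in ξ₁..ξ₂, f2 x = f1 ξ₂ - f1 ξ₁ := hFTC ξ₁ ξ₂ haξ₁ hξ₁ξ₂.le hξ₂b
  have hDelta : f1 ξ₂ - f1 ξ₁ = -(M / (b - c) + k) := by rw [hξ₁, hξ₂]; ring
  have hDeltaK : M / (b - c) + k ≤ K := by
    have h1 : |∫ x in ξ₁..ξ₂, f2 x| ≤ ∫ x in ξ₁..ξ₂, |f2 x| :=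
      intervalIntegral.abs_integral_le_integral_abs hξ₁ξ₂.le
    have h2 : (∫ x in ξ₁..ξ₂, |f2 x|) = K := by
      rw [intervalIntegral.integral_of_le hξ₁ξ₂.le, integral_Ioc_eq_integral_Ioo]
    have h3 : |∫ x in ξ₁..ξ₂, f2 x| = M / (b - c) + k := by
      rw [hIntf2, hDelta, abs_neg, abs_of_pos]
      positivity
    rw [h3, h2] at h1
    exact h1
  have hMk : M = k * (c - a) := by rw [hkdef, div_mul_cancel₀ _ hca'.ne']
  have hAMHM : M * (4 / (b - a)) ≤ M / (b - c) + k := by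
    rw [hkdef]
    have h1 : M * (4 / (b - a)) = 4 * M / (b - a) := by ring
    have h2 : M / (b - c) + M / (c - a) = M * (b - a) / ((b - c) * (c - a)) := by
      field_simp
      ring
    rw [h1, h2, div_le_div_iff₀ (by linarith) (by positivity)]
    nlinarith [mul_nonneg hMpos.le (sq_nonneg ((c - a) - (b - c)))]
  -- all inequalities are equalities
  have hchain : M * J ≤ M * (4 / (b - a)) := by
    rw [← hI]
    exact mul_le_mul_of_nonneg_left hJleI hMpos.le
  have hKeq : K = M / (b - c) + k := le_antisymm (by linarith) hDeltaK
  have hJeqI : J = ∫ x in Ioo a b, g x := by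
    have h1 : M * (4 / (b - a)) ≤ M * J := by linarith
    have h2 : (4 : ℝ) / (b - a) ≤ J := le_of_mul_le_mul_left h1 hMpos
    rw [← hI] at h2
    exact le_antisymm hJleI h2
  -- f2 ≤ 0 a.e. on Ioo ξ₁ ξ₂
  have hf2nonpos : ∀ᵐ x ∂(volume.restrict (Ioo ξ₁ ξ₂)), f2 x ≤ 0 := by
    have hsum : (∫ x in Ioo ξ₁ ξ₂, (|f2 x| + f2 x)) = 0 := by
      have h4 : (∫ x in Ioo ξ₁ ξ₂, f2 x) = f1 ξ₂ - f1 ξ₁ := by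
        rw [← integral_Ioc_eq_integral_Ioo, ← intervalIntegral.integral_of_le hξ₁ξ₂.le]
        exact hIntf2
      rw [integral_add habsint12 (hf2int _ hsub12 measurableSet_Ioo), h4, hDelta, ← hKdef, hKeq]
      ring
    have hnn : 0 ≤ᶠ[ae (volume.restrict (Ioo ξ₁ ξ₂))] fun x => |f2 x| + f2 x := by
      filter_upwards with x
      simp only [Pi.zero_apply]
      linarith [abs_nonneg (f2 x), neg_abs_le (f2 x)]
    have := (integral_eq_zero_iff_of_nonneg_ae hnn
      (habsint12.add (hf2int _ hsub12 measurableSet_Ioo))).mp hsum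
    filter_upwards [this] with x hx
    simp only [Pi.zero_apply] at hx
    have : |f2 x| = -f2 x := by linarith [abs_nonneg (f2 x)]
    linarith [abs_nonneg (f2 x)]
  -- f2 = 0 a.e. on Ioo a ξ₁
  have hf2zero : ∀ᵐ x ∂(volume.restrict (Ioo a ξ₁)), f2 x = 0 := by
    have hsubL : Ioo a ξ₁ ⊆ Ioo a b := fun x hx => ⟨hx.1, hx.2.trans (hξ₁c.trans hcb)⟩
    have hsubR : Ico ξ₁ b ⊆ Ioo a b := fun x hx => ⟨haξ₁.trans_le hx.1, hx.2⟩
    have hdisj : Disjoint (Ioo a ξ₁) (Ico ξ₁ b) :=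
      Set.disjoint_left.mpr fun x hx hx' => absurd hx.2 (not_lt.2 hx'.1)
    have hunion : Ioo a ξ₁ ∪ Ico ξ₁ b = Ioo a b :=
      Ioo_union_Ico_eq_Ioo haξ₁ (hξ₁c.trans hcb).le
    have hsplit : (∫ x in Ioo a b, g x)
        = (∫ x in Ioo a ξ₁, g x) + ∫ x in Ico ξ₁ b, g x := by
      rw [← hunion]
      exact setIntegral_union hdisj measurableSet_Ico (hint.mono_set hsubL)
        (hint.mono_set hsubR)
    have hJle : J ≤ ∫ x in Ico ξ₁ b, g x :=
      setIntegral_mono_set (hint.mono_set hsubR)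
        (ae_restrict_of_ae_restrict_of_subset hsubR hgnn_ab)
        (HasSubset.Subset.eventuallyLE (fun x hx => ⟨hx.1.le, hx.2.trans hξ₂b⟩))
    have hnnL : 0 ≤ ∫ x in Ioo a ξ₁, g x :=
      setIntegral_nonneg_of_ae_restrict (ae_restrict_of_ae_restrict_of_subset hsubL hgnn_ab)
    have hLzero : (∫ x in Ioo a ξ₁, g x) = 0 := by
      rw [hJeqI] at hJle
      linarith [hsplit, hJle, hnnL]
    have := (integral_eq_zero_iff_of_nonneg_ae
      (ae_restrict_of_ae_restrict_of_subset hsubL hgnn_ab) (hint.mono_set hsubL)).mp hLzero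
    filter_upwards [this, ae_restrict_mem measurableSet_Ioo] with x hx hx'
    simp only [Pi.zero_apply] at hx
    have hfx : 0 < f x := hpos x (hsubL hx')
    have : |f2 x| = 0 := by
      by_contra hne
      have h1 : 0 < |f2 x| := lt_of_le_of_ne (abs_nonneg _) (Ne.symm hne)
      have : 0 < g x := div_pos h1 hfx
      rw [hx] at this
      exact lt_irrefl _ this
    exact abs_eq_zero.mp this
  -- f1 = k on (a, ξ₁]
  have hf1const : ∀ x ∈ Ioc a ξ₁, f1 x = k := by
    intro x hx
    rcases hx.2.lt_or_eq with hlt | heq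
    · have hInt0 : (∫ t in x..ξ₁, f2 t) = 0 := by
        rw [intervalIntegral.integral_of_le hlt.le, integral_Ioc_eq_integral_Ioo]
        apply integral_eq_zero_of_ae
        exact ae_restrict_of_ae_restrict_of_subset
          (show Ioo x ξ₁ ⊆ Ioo a ξ₁ from fun t ht => ⟨hx.1.trans ht.1, ht.2⟩) hf2zero
      have := hFTC x ξ₁ hx.1 hlt.le (hξ₁c.trans hcb)
      rw [hInt0] at this
      rw [← hξ₁]
      linarith [this]
    · rw [heq, hξ₁]
  -- f ξ₁ = k * (ξ₁ - a)
  have hfξ₁ : f ξ₁ = k * (ξ₁ - a) := by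
    have hval : ∀ x ∈ Ioo a ξ₁, f x = f ξ₁ - k * (ξ₁ - x) := by
      intro x hx
      have hftc : (∫ t in x..ξ₁, k) = f ξ₁ - f x := by
        apply intervalIntegral.integral_eq_sub_of_hasDerivAt
        · intro t ht
          rw [uIcc_of_le hx.2.le] at ht
          have htIoc : t ∈ Ioc a ξ₁ := ⟨hx.1.trans_le ht.1, ht.2⟩
          have hdf : DifferentiableAt ℝ f t :=
            hd1 t ⟨htIoc.1, lt_of_le_of_lt ht.2 (hξ₁c.trans hcb)⟩
          have := hdf.hasDerivAt
          rwa [show deriv f t = k from hf1const t htIoc] at this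
        · exact intervalIntegrable_const
      rw [intervalIntegral.integral_const, smul_eq_mul] at hftc
      have : (ξ₁ - x) * k = f ξ₁ - f x := hftc
      linarith [this]
    have hne : NeBot (𝓝[Ioo a ξ₁] a) := by
      rw [← mem_closure_iff_nhdsWithin_neBot, closure_Ioo (ne_of_lt haξ₁)]
      exact ⟨le_rfl, haξ₁.le⟩
    have ht1 : Filter.Tendsto f (𝓝[Ioo a ξ₁] a) (𝓝 0) := by
      have : Filter.Tendsto f (𝓝[Icc a b] a) (𝓝 (f a)) := hc a ⟨le_rfl, hab.le⟩
      rw [ha] at this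
      exact this.mono_left (nhdsWithin_mono a
        (fun x hx => ⟨hx.1.le, hx.2.le.trans (hξ₁c.trans hcb).le⟩))
    have ht2 : Filter.Tendsto f (𝓝[Ioo a ξ₁] a) (𝓝 (f ξ₁ - k * (ξ₁ - a))) := by
      have hcont : Filter.Tendsto (fun x => f ξ₁ - k * (ξ₁ - x)) (𝓝[Ioo a ξ₁] a)
          (𝓝 (f ξ₁ - k * (ξ₁ - a))) := by
        apply Filter.Tendsto.mono_left _ nhdsWithin_le_nhds
        exact Continuous.tendsto
          (continuous_const.sub (continuous_const.mul (continuous_const.sub continuous_id))) a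
      apply hcont.congr'
      filter_upwards [self_mem_nhdsWithin] with x hx
      exact (hval x hx).symm
    have := tendsto_nhds_unique ht1 ht2
    linarith [this]
  -- f1 nonincreasing on [ξ₁, c]
  have hmono : ∀ x y, ξ₁ ≤ x → x ≤ y → y ≤ c → f1 y ≤ f1 x := by
    intro x y hx hxy hy
    have hftc := hFTC x y (haξ₁.trans_le hx) hxy ((hy.trans_lt hcξ₂).trans hξ₂b)
    have hle : (∫ t in x..y, f2 t) ≤ 0 := by
      rw [intervalIntegral.integral_of_le hxy]
      apply integral_nonpos_of_ae
      exact ae_restrict_of_ae_restrict_of_subset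
        (show Ioc x y ⊆ Ioo ξ₁ ξ₂ from
          fun t ht => ⟨hx.trans_lt ht.1, lt_of_le_of_lt (ht.2.trans hy) hcξ₂⟩) hf2nonpos
    linarith [hftc, hle]
  -- f1 continuous on Ioo a b
  have hf1cont : ∀ x ∈ Ioo a b, ContinuousAt f1 x := fun x hx => (hd2 x hx).continuousAt
  have hf1II : ∀ u v : ℝ, a < u → u ≤ v → v < b → IntervalIntegrable f1 volume u v := by
    intro u v hu huv hv
    apply ContinuousOn.intervalIntegrable
    intro t ht
    rw [uIcc_of_le huv] at ht
    exact ((hf1cont t ⟨hu.trans_le ht.1, ht.2.trans_lt hv⟩)).continuousWithinAt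
  have hfFTC : ∀ u v : ℝ, a < u → u ≤ v → v < b → ∫ x in u..v, f1 x = f v - f u := by
    intro u v hu huv hv
    apply intervalIntegral.integral_eq_sub_of_hasDerivAt
    · intro x hx
      rw [uIcc_of_le huv] at hx
      exact (hd1 x ⟨hu.trans_le hx.1, hx.2.trans_lt hv⟩).hasDerivAt
    · exact hf1II u v hu huv hv
  -- claim: f1 = k on (ξ₁, c)
  have hclaim : ∀ m ∈ Ioo ξ₁ c, f1 m = k := by
    intro m hm
    have hmIoo : m ∈ Ioo a b := ⟨haξ₁.trans hm.1, hm.2.trans hcb⟩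
    have hle : f1 m ≤ k := by
      rw [← hξ₁]; exact hmono ξ₁ m le_rfl hm.1.le hm.2.le
    have hA1 : f c - f m ≤ f1 m * (c - m) := by
      have h1 := hfFTC m c hmIoo.1 hm.2.le hcb
      have h2 : (∫ x in m..c, f1 x) ≤ ∫ x in m..c, (fun _ => f1 m) x := by
        apply intervalIntegral.integral_mono_on hm.2.le
          (hf1II m c hmIoo.1 hm.2.le hcb) intervalIntegrable_const
        intro t ht
        exact hmono m t hm.1.le ht.1 ht.2
      rw [intervalIntegral.integral_const, smul_eq_mul, h1] at h2
      linarith [h2]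
    have hA2 : f m - f ξ₁ ≤ k * (m - ξ₁) := by
      have h1 := hfFTC ξ₁ m haξ₁ hm.1.le hmIoo.2
      have h2 : (∫ x in ξ₁..m, f1 x) ≤ ∫ x in ξ₁..m, (fun _ => k) x := by
        apply intervalIntegral.integral_mono_on hm.1.le
          (hf1II ξ₁ m haξ₁ hm.1.le hmIoo.2) intervalIntegrable_const
        intro t ht
        rw [← hξ₁]
        exact hmono ξ₁ t le_rfl ht.1 (ht.2.trans hm.2.le)
      rw [intervalIntegral.integral_const, smul_eq_mul, h1] at h2
      linarith [h2]
    have hge : k ≤ f1 m := by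
      have hMc : f c = k * (c - a) := hMk
      have hcombined : k * (c - m) ≤ f1 m * (c - m) := by
        rw [hfξ₁] at hA2
        have hexp : k * (c - m) = k * (c - a) - k * (ξ₁ - a) - k * (m - ξ₁) := by ring
        linarith [hA1, hA2, hMc, hexp]
      have hcm : 0 < c - m := by linarith [hm.2]
      exact le_of_mul_le_mul_right (by linarith [hcombined]) hcm
    exact le_antisymm hle hge
  -- conclusion
  have hne : NeBot (𝓝[Ioo ξ₁ c] c) := by
    rw [← mem_closure_iff_nhdsWithin_neBot, closure_Ioo (ne_of_lt hξ₁c)]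
    exact ⟨hξ₁c.le, le_rfl⟩
  have ht1 : Filter.Tendsto f1 (𝓝[Ioo ξ₁ c] c) (𝓝 (f1 c)) :=
    ((hf1cont c hcIoo).tendsto).mono_left nhdsWithin_le_nhds
  have ht2 : Filter.Tendsto f1 (𝓝[Ioo ξ₁ c] c) (𝓝 k) := by
    apply Filter.Tendsto.congr' _ tendsto_const_nhds
    filter_upwards [self_mem_nhdsWithin] with x hx
    exact (hclaim x hx).symm
  have := tendsto_nhds_unique ht1 ht2
  rw [hf1c] at this
  exact absurd this.symm (ne_of_gt hkpos)
end

section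
/- Cordes-type generalisation setup (special case): if f is continuous on [a,b], twice differentiable on (a,b), positive in (a,b) with f(a) = f(b) = 0, then for every x₁ ∈ (a,b) at which f attains its maximum, ∫_a^b |f''|/f > (b-a)/((x₁-a)(b-x₁)). -/
open MeasureTheory Set

lemma lyap_core (f : ℝ → ℝ) (M u v r : ℝ) (huv : u < v) (hM : 0 < M) (hr : 0 < r)
    (hd : ∀ x ∈ Icc u v, HasDerivAt (deriv f) (deriv (deriv f) x) x)
    (hfpos : ∀ x ∈ Icc u v, 0 < f x)
    (hfM : ∀ x ∈ Icc u v, f x ≤ M)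
    (hflt : ∀ x ∈ Ioo u v, f x < M)
    (hcont : ContinuousOn f (Icc u v))
    (hfin : ∫⁻ x in Ioo u v, ENNReal.ofReal (|deriv (deriv f) x| / f x) ≠ ⊤)
    (hder : |deriv f v - deriv f u| = r) :
    ENNReal.ofReal (r / M) < ∫⁻ x in Ioo u v, ENNReal.ofReal (|deriv (deriv f) x| / f x) := by
  set g := deriv (deriv f) with hg
  have hgmeas : Measurable g := measurable_deriv _
  have haef : AEMeasurable f (volume.restrict (Ioo u v)) :=
    (hcont.mono Ioo_subset_Icc_self).aemeasurable measurableSet_Ioo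
  have hφae : AEMeasurable (fun x => ENNReal.ofReal (|g x| / f x))
      (volume.restrict (Ioo u v)) :=
    ((hgmeas.abs.aemeasurable).div haef).ennreal_ofReal
  -- pointwise bound for integrability of g
  have key : ∀ x ∈ Ioo u v, (‖g x‖₊ : ENNReal) ≤
      ENNReal.ofReal M * ENNReal.ofReal (|g x| / f x) := by
    intro x hx
    have hf0 := hfpos x (Ioo_subset_Icc_self hx)
    have hfM' := hfM x (Ioo_subset_Icc_self hx)
    rw [← enorm_eq_nnnorm, Real.enorm_eq_ofReal_abs, ← ENNReal.ofReal_mul hM.le]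
    apply ENNReal.ofReal_le_ofReal
    have h1 : |g x| / M ≤ |g x| / f x := div_le_div_of_nonneg_left (abs_nonneg _) hf0 hfM'
    calc |g x| = M * (|g x| / M) := by field_simp
      _ ≤ M * (|g x| / f x) := by nlinarith
  have hfinint : ∫⁻ x in Ioo u v, (‖g x‖₊ : ENNReal) < ⊤ := by
    calc ∫⁻ x in Ioo u v, (‖g x‖₊ : ENNReal)
        ≤ ∫⁻ x in Ioo u v, ENNReal.ofReal M * ENNReal.ofReal (|g x| / f x) := by
          refine lintegral_mono_ae ?_
          exact (ae_restrict_iff' measurableSet_Ioo).2 (Filter.Eventually.of_forall key)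
      _ = ENNReal.ofReal M * ∫⁻ x in Ioo u v, ENNReal.ofReal (|g x| / f x) :=
          lintegral_const_mul'' _ hφae
      _ < ⊤ := ENNReal.mul_lt_top ENNReal.ofReal_lt_top (lt_top_iff_ne_top.2 hfin)
  have hgint : IntegrableOn g (Ioo u v) :=
    ⟨hgmeas.aestronglyMeasurable.restrict, hfinint⟩
  have hgint' : IntervalIntegrable g volume u v :=
    (intervalIntegrable_iff_integrableOn_Ioo_of_le huv.le).2 hgint
  have hFTC : ∫ y in u..v, g y = deriv f v - deriv f u :=
    intervalIntegral.integral_eq_sub_of_hasDerivAt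
      (fun x hx => hd x (by rwa [uIcc_of_le huv.le] at hx)) hgint'
  have habs : r ≤ ∫ x in Ioo u v, |g x| := by
    have h1 : r ≤ ∫ y in u..v, |g y| := by
      rw [← hder, ← hFTC]
      exact intervalIntegral.abs_integral_le_integral_abs huv.le
    rwa [intervalIntegral.integral_of_le huv.le, integral_Ioc_eq_integral_Ioo] at h1
  have habsint : IntegrableOn (fun x => |g x|) (Ioo u v) := hgint.abs
  have h1 : ENNReal.ofReal r ≤ ∫⁻ x in Ioo u v, ENNReal.ofReal |g x| := by
    calc ENNReal.ofReal r ≤ ENNReal.ofReal (∫ x in Ioo u v, |g x|) :=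
          ENNReal.ofReal_le_ofReal habs
      _ = ∫⁻ x in Ioo u v, ENNReal.ofReal |g x| :=
          ofReal_integral_eq_lintegral_ofReal habsint
            (Filter.Eventually.of_forall fun x => abs_nonneg _)
  set ψ : ℝ → ℝ := fun x => |g x| / f x - |g x| / M with hψ
  have hψae : AEMeasurable (fun x => ENNReal.ofReal (ψ x)) (volume.restrict (Ioo u v)) :=
    (((hgmeas.abs.aemeasurable).div haef).sub
      ((hgmeas.abs.aemeasurable).div_const M)).ennreal_ofReal
  have hpt : ∀ x ∈ Ioo u v, ENNReal.ofReal (|g x| / f x) =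
      ENNReal.ofReal (1 / M) * ENNReal.ofReal |g x| + ENNReal.ofReal (ψ x) := by
    intro x hx
    have hf0 := hfpos x (Ioo_subset_Icc_self hx)
    have hfM' := hfM x (Ioo_subset_Icc_self hx)
    have h2 : |g x| / M ≤ |g x| / f x := div_le_div_of_nonneg_left (abs_nonneg _) hf0 hfM'
    rw [← ENNReal.ofReal_mul (by positivity : (0:ℝ) ≤ 1 / M),
      ← ENNReal.ofReal_add (by positivity) (by simpa [hψ] using h2)]
    congr 1
    simp [hψ]
    ring
  have hsplit : ∫⁻ x in Ioo u v, ENNReal.ofReal (|g x| / f x) =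
      ENNReal.ofReal (1 / M) * (∫⁻ x in Ioo u v, ENNReal.ofReal |g x|) +
      ∫⁻ x in Ioo u v, ENNReal.ofReal (ψ x) := by
    rw [setLIntegral_congr_fun measurableSet_Ioo hpt,
      lintegral_add_left (((hgmeas.abs).ennreal_ofReal).const_mul _),
      lintegral_const_mul _ ((hgmeas.abs).ennreal_ofReal)]
  have hpart2 : ∫⁻ x in Ioo u v, ENNReal.ofReal (ψ x) ≠ 0 := by
    intro h0
    have hae := (lintegral_eq_zero_iff' hψae).1 h0
    have hae' : ∀ᵐ x ∂(volume.restrict (Ioo u v)), x ∈ Ioo u v →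
        ENNReal.ofReal (ψ x) = 0 := by
      filter_upwards [hae] with x hx _ using hx
    have hgz : (fun x => |g x|) =ᶠ[ae (volume.restrict (Ioo u v))] 0 := by
      have hmem : ∀ᵐ x ∂(volume.restrict (Ioo u v)), x ∈ Ioo u v :=
        ae_restrict_mem measurableSet_Ioo
      filter_upwards [hae, hmem] with x hx hxm
      have hf0 := hfpos x (Ioo_subset_Icc_self hxm)
      have hflt' := hflt x hxm
      have hψle : ψ x ≤ 0 := by
        by_contra hcon
        push_neg at hcon
        exact (ENNReal.ofReal_pos.2 hcon).ne' hx
      have hfac : 0 < 1 / f x - 1 / M := by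
        have : 1 / M < 1 / f x := by
          apply one_div_lt_one_div_of_lt hf0 hflt'
        linarith
      have hψx : ψ x = |g x| * (1 / f x - 1 / M) := by
        simp only [hψ]
        field_simp
      have : |g x| ≤ 0 := by nlinarith [abs_nonneg (g x), hψx ▸ hψle]
      simpa using le_antisymm this (abs_nonneg _)
    have : ∫ x in Ioo u v, |g x| = 0 := integral_eq_zero_of_ae hgz
    rw [this] at habs
    linarith
  have hbound : ENNReal.ofReal (r / M) ≤
      ENNReal.ofReal (1 / M) * ∫⁻ x in Ioo u v, ENNReal.ofReal |g x| := by
    calc ENNReal.ofReal (r / M) = ENNReal.ofReal (1 / M) * ENNReal.ofReal r := by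
          rw [← ENNReal.ofReal_mul (by positivity : (0:ℝ) ≤ 1 / M)]
          congr 1
          ring
      _ ≤ _ := mul_le_mul_right h1 _
  calc ENNReal.ofReal (r / M)
      < ENNReal.ofReal (r / M) + ∫⁻ x in Ioo u v, ENNReal.ofReal (ψ x) :=
        ENNReal.lt_add_right ENNReal.ofReal_ne_top hpart2
    _ ≤ ENNReal.ofReal (1 / M) * (∫⁻ x in Ioo u v, ENNReal.ofReal |g x|) +
        ∫⁻ x in Ioo u v, ENNReal.ofReal (ψ x) := add_le_add_left hbound _
    _ = ∫⁻ x in Ioo u v, ENNReal.ofReal (|g x| / f x) := hsplit.symm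

theorem lyapunov_refined (a b x₁ : ℝ) (f : ℝ → ℝ) (hab : a < b)
    (hc : ContinuousOn f (Icc a b))
    (hd1 : ∀ x ∈ Ioo a b, DifferentiableAt ℝ f x)
    (hd2 : ∀ x ∈ Ioo a b, DifferentiableAt ℝ (deriv f) x)
    (hpos : ∀ x ∈ Ioo a b, 0 < f x)
    (ha : f a = 0) (hb : f b = 0)
    (hx₁ : x₁ ∈ Ioo a b)
    (hmax : ∀ x ∈ Icc a b, f x ≤ f x₁) :
    ENNReal.ofReal ((b - a) / ((x₁ - a) * (b - x₁))) <
      ∫⁻ x in Ioo a b, ENNReal.ofReal (|deriv (deriv f) x| / f x) := by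
  by_cases htop : (∫⁻ x in Ioo a b, ENNReal.ofReal (|deriv (deriv f) x| / f x)) = ⊤
  · rw [htop]; exact ENNReal.ofReal_lt_top
  obtain ⟨ha1, hb1⟩ := hx₁
  set M := f x₁ with hMdef
  have hM : 0 < M := hpos x₁ ⟨ha1, hb1⟩
  -- x₀ : first max point
  set S : Set ℝ := Icc a x₁ ∩ f ⁻¹' {M} with hS
  have hSne : x₁ ∈ S := ⟨⟨ha1.le, le_rfl⟩, rfl⟩
  have hSbdd : BddBelow S := ⟨a, fun y hy => hy.1.1⟩
  have hScl : IsClosed S :=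
    (hc.mono (Icc_subset_Icc le_rfl hb1.le)).preimage_isClosed_of_isClosed
      isClosed_Icc isClosed_singleton
  set x₀ := sInf S with hx₀def
  have hx₀S : x₀ ∈ S := hScl.csInf_mem ⟨x₁, hSne⟩ hSbdd
  have hx₀M : f x₀ = M := hx₀S.2
  have hx₀x₁ : x₀ ≤ x₁ := csInf_le hSbdd hSne
  have hax₀ : a < x₀ := by
    rcases lt_or_eq_of_le hx₀S.1.1 with h | h
    · exact h
    · exfalso; rw [← h] at hx₀M; rw [ha] at hx₀M; linarith
  have hx₀b : x₀ < b := lt_of_le_of_lt hx₀x₁ hb1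
  have hltA : ∀ x ∈ Ioo a x₀, f x < M := by
    intro x hx
    have hxIcc : x ∈ Icc a b := ⟨hx.1.le, ((hx.2.trans_le hx₀x₁).trans hb1).le⟩
    refine lt_of_le_of_ne (hmax x hxIcc) fun hEq => ?_
    have : x₀ ≤ x := csInf_le hSbdd ⟨⟨hx.1.le, hx.2.le.trans hx₀x₁⟩, hEq⟩
    exact absurd this (not_le.2 hx.2)
  have hdx₀ : deriv f x₀ = 0 := by
    have hloc : IsLocalMax f x₀ := by
      refine Filter.eventually_of_mem (Ioo_mem_nhds hax₀ hx₀b) fun y hy => ?_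
      exact (hmax y (Ioo_subset_Icc_self hy)).trans_eq hx₀M.symm
    exact hloc.deriv_eq_zero
  -- y₀ : last max point
  set T : Set ℝ := Icc x₁ b ∩ f ⁻¹' {M} with hT
  have hTne : x₁ ∈ T := ⟨⟨le_rfl, hb1.le⟩, rfl⟩
  have hTbdd : BddAbove T := ⟨b, fun y hy => hy.1.2⟩
  have hTcl : IsClosed T :=
    (hc.mono (Icc_subset_Icc ha1.le le_rfl)).preimage_isClosed_of_isClosed
      isClosed_Icc isClosed_singleton
  set y₀ := sSup T with hy₀def
  have hy₀T : y₀ ∈ T := hTcl.csSup_mem ⟨x₁, hTne⟩ hTbdd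
  have hy₀M : f y₀ = M := hy₀T.2
  have hx₁y₀ : x₁ ≤ y₀ := le_csSup hTbdd hTne
  have hy₀b : y₀ < b := by
    rcases lt_or_eq_of_le hy₀T.1.2 with h | h
    · exact h
    · exfalso; rw [h] at hy₀M; rw [hb] at hy₀M; linarith
  have hay₀ : a < y₀ := lt_of_lt_of_le ha1 hx₁y₀
  have hltB : ∀ x ∈ Ioo y₀ b, f x < M := by
    intro x hx
    have hxIcc : x ∈ Icc a b := ⟨(lt_of_le_of_lt (ha1.le.trans hx₁y₀) hx.1).le, hx.2.le⟩
    refine lt_of_le_of_ne (hmax x hxIcc) fun hEq => ?_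
    have : x ≤ y₀ := le_csSup hTbdd ⟨⟨hx₁y₀.trans hx.1.le, hx.2.le⟩, hEq⟩
    exact absurd this (not_le.2 hx.1)
  have hdy₀ : deriv f y₀ = 0 := by
    have hloc : IsLocalMax f y₀ := by
      refine Filter.eventually_of_mem (Ioo_mem_nhds hay₀ hy₀b) fun y hy => ?_
      exact (hmax y (Ioo_subset_Icc_self hy)).trans_eq hy₀M.symm
    exact hloc.deriv_eq_zero
  -- MVT on [a, x₀]
  obtain ⟨ξ, hξmem, hξ⟩ := exists_deriv_eq_slope f hax₀
    (hc.mono (Icc_subset_Icc le_rfl hx₀b.le))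
    (fun x hx => (hd1 x ⟨hx.1, hx.2.trans hx₀b⟩).differentiableWithinAt)
  rw [hx₀M, ha, sub_zero] at hξ
  -- MVT on [y₀, b]
  obtain ⟨η, hηmem, hη⟩ := exists_deriv_eq_slope f hy₀b
    (hc.mono (Icc_subset_Icc hay₀.le le_rfl))
    (fun x hx => (hd1 x ⟨hay₀.trans hx.1, hx.2⟩).differentiableWithinAt)
  rw [hy₀M, hb, zero_sub] at hη
  -- apply core on (ξ, x₀)
  have hsubA : Ioo ξ x₀ ⊆ Ioo a b := fun x hx => ⟨hξmem.1.trans hx.1, hx.2.trans hx₀b⟩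
  have hIccA : Icc ξ x₀ ⊆ Ioo a b := fun x hx =>
    ⟨hξmem.1.trans_le hx.1, lt_of_le_of_lt hx.2 hx₀b⟩
  have hA := lyap_core f M ξ x₀ (M / (x₀ - a)) hξmem.2 hM
    (div_pos hM (by linarith))
    (fun x hx => (hd2 x (hIccA hx)).hasDerivAt)
    (fun x hx => hpos x (hIccA hx))
    (fun x hx => hmax x (Ioo_subset_Icc_self (hIccA hx)))
    (fun x hx => hltA x ⟨hξmem.1.trans hx.1, hx.2⟩)
    (hc.mono fun x hx => Ioo_subset_Icc_self (hIccA hx))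
    (fun h => htop (top_le_iff.1 (h ▸ lintegral_mono_set hsubA)))
    (by rw [hdx₀, hξ, zero_sub, abs_neg, abs_of_pos (div_pos hM (by linarith))])
  -- apply core on (y₀, η)
  have hsubB : Ioo y₀ η ⊆ Ioo a b := fun x hx => ⟨hay₀.trans hx.1, hx.2.trans hηmem.2⟩
  have hIccB : Icc y₀ η ⊆ Ioo a b := fun x hx =>
    ⟨hay₀.trans_le hx.1, lt_of_le_of_lt hx.2 hηmem.2⟩
  have hB := lyap_core f M y₀ η (M / (b - y₀)) hηmem.1 hM
    (div_pos hM (by linarith))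
    (fun x hx => (hd2 x (hIccB hx)).hasDerivAt)
    (fun x hx => hpos x (hIccB hx))
    (fun x hx => hmax x (Ioo_subset_Icc_self (hIccB hx)))
    (fun x hx => hltB x ⟨hx.1, hx.2.trans hηmem.2⟩)
    (hc.mono fun x hx => Ioo_subset_Icc_self (hIccB hx))
    (fun h => htop (top_le_iff.1 (h ▸ lintegral_mono_set hsubB)))
    (by rw [hdy₀, hη, sub_zero, neg_div, abs_neg, abs_of_pos (div_pos hM (by linarith))])
  -- combine
  have heqA : M / (x₀ - a) / M = 1 / (x₀ - a) := by
    have h1 : x₀ - a ≠ 0 := by linarith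
    field_simp
  have heqB : M / (b - y₀) / M = 1 / (b - y₀) := by
    have h1 : b - y₀ ≠ 0 := by linarith
    field_simp
  rw [heqA] at hA
  rw [heqB] at hB
  have hdisj : Disjoint (Ioo ξ x₀) (Ioo y₀ η) := by
    rw [Set.disjoint_left]
    intro x hx1 hx2
    have : x < x₀ := hx1.2
    have : y₀ < x := hx2.1
    have : x₀ ≤ y₀ := hx₀x₁.trans hx₁y₀
    linarith
  have hunion : (∫⁻ x in Ioo ξ x₀, ENNReal.ofReal (|deriv (deriv f) x| / f x)) +
      (∫⁻ x in Ioo y₀ η, ENNReal.ofReal (|deriv (deriv f) x| / f x)) ≤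
      ∫⁻ x in Ioo a b, ENNReal.ofReal (|deriv (deriv f) x| / f x) := by
    rw [← lintegral_union measurableSet_Ioo hdisj]
    exact lintegral_mono_set (union_subset hsubA hsubB)
  have harith : (b - a) / ((x₁ - a) * (b - x₁)) = 1 / (x₁ - a) + 1 / (b - x₁) := by
    have h1 : x₁ - a ≠ 0 := by linarith
    have h2 : b - x₁ ≠ 0 := by linarith
    field_simp
    ring
  calc ENNReal.ofReal ((b - a) / ((x₁ - a) * (b - x₁)))
      = ENNReal.ofReal (1 / (x₁ - a)) + ENNReal.ofReal (1 / (b - x₁)) := by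
        rw [harith, ENNReal.ofReal_add
          (le_of_lt (one_div_pos.mpr (by linarith)))
          (le_of_lt (one_div_pos.mpr (by linarith)))]
    _ ≤ ENNReal.ofReal (1 / (x₀ - a)) + ENNReal.ofReal (1 / (b - y₀)) :=
        add_le_add
          (ENNReal.ofReal_le_ofReal
            (one_div_le_one_div_of_le (by linarith) (by linarith)))
          (ENNReal.ofReal_le_ofReal
            (one_div_le_one_div_of_le (by linarith) (by linarith)))
    _ < (∫⁻ x in Ioo ξ x₀, ENNReal.ofReal (|deriv (deriv f) x| / f x)) +
        (∫⁻ x in Ioo y₀ η, ENNReal.ofReal (|deriv (deriv f) x| / f x)) :=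
        ENNReal.add_lt_add hA hB
    _ ≤ _ := hunion
end
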